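/- Suppose f, f_t and f_{tx} exist and are continuous on the closed rectangle [0,ε]×[0,ε̂], and f_x(x,0) exists for all x ∈ [0,ε]. Then f_x and f_{xt} exist everywhere on [0,ε]×[0,ε̂] and f_{xt} = f_{tx}. -/

import Mathlib

open Set MeasureTheory intervalIntegral

/-- Tietze extension for `ℂ`-valued continuous functions on a closed subset of `ℝ × ℝ`. -/
lemma exists_cont_ext {s : Set (ℝ × ℝ)} (hs : IsClosed s) {g : ℝ × ℝ → ℂ}
    (hg : ContinuousOn g s) : ∃ G : ℝ × ℝ → ℂ, Continuous G ∧ ∀ p ∈ s, G p = g p := by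
  obtain ⟨G, hG⟩ := ContinuousMap.exists_restrict_eq hs ⟨s.restrict g, hg.restrict⟩
  exact ⟨G, G.continuous, fun p hp => congrFun (congrArg DFunLike.coe hG) ⟨p, hp⟩⟩

/-- FTC-1 within a closed interval, for a globally continuous integrand. -/
lemma ftc_within {h : ℝ → ℂ} (hc : Continuous h) {a b x : ℝ} (hx : x ∈ Icc a b) :
    HasDerivWithinAt (fun y => ∫ u in a..y, h u) (h x) (Icc a b) x := by
  haveI : Fact (x ∈ Icc a b) := ⟨hx⟩
  exact intervalIntegral.integral_hasDerivWithinAt_right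
    (hc.intervalIntegrable a x)
    hc.stronglyMeasurable.stronglyMeasurableAtFilter
    hc.continuousAt.continuousWithinAt

/-- FTC-2 within a closed interval. -/
lemma ftc2 {g g' : ℝ → ℂ} {a b : ℝ} (hab : a ≤ b)
    (hcont : ContinuousOn g (Icc a b))
    (hderiv : ∀ x ∈ Icc a b, HasDerivWithinAt g (g' x) (Icc a b) x)
    (hint : IntervalIntegrable g' MeasureTheory.volume a b) :
    ∫ y in a..b, g' y = g b - g a :=
  intervalIntegral.integral_eq_sub_of_hasDeriv_right_of_le hab hcont
    (fun x hx => ((hderiv x (Ioo_subset_Icc_self hx)).hasDerivAt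
      (Icc_mem_nhds hx.1 hx.2)).hasDerivWithinAt) hint

/-- Strengthened Clairaut/Schwarz theorem on a closed rectangle with one-sided derivatives. -/
theorem stmt_10 (ε εhat : ℝ) (hε : 0 < ε) (hεhat : 0 < εhat)
    (f ft ftx : ℝ → ℝ → ℂ)
    (hf : ContinuousOn (fun p : ℝ × ℝ => f p.1 p.2) (Icc 0 ε ×ˢ Icc 0 εhat))
    -- `ft` is the partial derivative of `f` in `t` on the rectangle:
    (hft : ∀ x ∈ Icc 0 ε, ∀ t ∈ Icc 0 εhat,
      HasDerivWithinAt (fun s => f x s) (ft x t) (Icc 0 εhat) t)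
    (hftc : ContinuousOn (fun p : ℝ × ℝ => ft p.1 p.2) (Icc 0 ε ×ˢ Icc 0 εhat))
    -- `ftx` is the partial derivative of `ft` in `x` on the rectangle:
    (hftx : ∀ x ∈ Icc 0 ε, ∀ t ∈ Icc 0 εhat,
      HasDerivWithinAt (fun y => ft y t) (ftx x t) (Icc 0 ε) x)
    (hftxc : ContinuousOn (fun p : ℝ × ℝ => ftx p.1 p.2) (Icc 0 ε ×ˢ Icc 0 εhat))
    -- `f_x(x, 0)` exists for all `x ∈ [0, ε]`:
    (hfx0 : ∀ x ∈ Icc 0 ε, ∃ d : ℂ, HasDerivWithinAt (fun y => f y 0) d (Icc 0 ε) x) :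
    ∃ fx : ℝ → ℝ → ℂ,
      (∀ x ∈ Icc 0 ε, ∀ t ∈ Icc 0 εhat,
        HasDerivWithinAt (fun y => f y t) (fx x t) (Icc 0 ε) x) ∧
      (∀ x ∈ Icc 0 ε, ∀ t ∈ Icc 0 εhat,
        HasDerivWithinAt (fun s => fx x s) (ftx x t) (Icc 0 εhat) t) := by
  obtain ⟨F, hFc, hFeq⟩ := exists_cont_ext (isClosed_Icc.prod isClosed_Icc) hftxc
  classical
  set d : ℝ → ℂ := fun x => if hx : x ∈ Icc 0 ε then Classical.choose (hfx0 x hx) else 0 with hd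
  refine ⟨fun x t => d x + ∫ s in (0:ℝ)..t, F (x, s), ?_, ?_⟩
  · intro x hx t ht
    set G : ℝ → ℂ := fun u => ∫ s in (0:ℝ)..t, F (u, s) with hGdef
    have hGc : Continuous G := by
      have : Continuous (Function.uncurry fun u s => F (u, s)) := by
        exact hFc
      exact continuous_parametric_intervalIntegral_of_continuous' this 0 t
    -- the key pointwise identity
    have key : ∀ y ∈ Icc 0 ε,
        f y t = f y 0 + (∫ s in (0:ℝ)..t, ft 0 s) + ∫ u in (0:ℝ)..y, G u := by
      intro y hy
      -- FTC in t: ∫₀ᵗ ft y s = f y t - f y 0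
      have hcy : ContinuousOn (fun s => f y s) (Icc 0 εhat) :=
        hf.comp (Continuous.continuousOn (by fun_prop)) (fun s hs => Set.mk_mem_prod hy hs)
      have hcty : ContinuousOn (fun s => ft y s) (Icc 0 εhat) :=
        hftc.comp (Continuous.continuousOn (by fun_prop)) (fun s hs => Set.mk_mem_prod hy hs)
      have step1 : ∫ s in (0:ℝ)..t, ft y s = f y t - f y 0 :=
        ftc2 ht.1 (hcy.mono (Icc_subset_Icc le_rfl ht.2))
          (fun s hs => (hft y hy s ⟨hs.1, hs.2.trans ht.2⟩).mono
            (Icc_subset_Icc le_rfl ht.2))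
          ((hcty.mono (Icc_subset_Icc le_rfl ht.2)).intervalIntegrable_of_Icc ht.1)
      -- FTC in x: for each s, ∫₀ʸ F(u,s) = ft y s - ft 0 s
      have step2 : ∀ s ∈ Icc (0:ℝ) εhat,
          (∫ u in (0:ℝ)..y, F (u, s)) = ft y s - ft 0 s := by
        intro s hs
        have hcx : ContinuousOn (fun u => ft u s) (Icc 0 ε) :=
          hftc.comp (Continuous.continuousOn (by fun_prop))
            (fun u hu => Set.mk_mem_prod hu hs)
        have e1 : (∫ u in (0:ℝ)..y, F (u, s)) = ∫ u in (0:ℝ)..y, ftx u s := by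
          apply intervalIntegral.integral_congr
          intro u hu
          rw [uIcc_of_le hy.1] at hu
          exact hFeq (u, s) (Set.mk_mem_prod ⟨hu.1, hu.2.trans hy.2⟩ hs)
        rw [e1]
        exact ftc2 hy.1 (hcx.mono (Icc_subset_Icc le_rfl hy.2))
          (fun u hu => (hftx u ⟨hu.1, hu.2.trans hy.2⟩ s hs).mono
            (Icc_subset_Icc le_rfl hy.2))
          (((hftxc.comp (Continuous.continuousOn (by fun_prop))
            (fun u hu => Set.mk_mem_prod hu hs)).mono
              (Icc_subset_Icc le_rfl hy.2)).intervalIntegrable_of_Icc hy.1)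
      -- rewrite the t-integral
      have hint1 : IntervalIntegrable (fun s => ft 0 s) MeasureTheory.volume 0 t :=
        ((hftc.comp (Continuous.continuousOn (by fun_prop))
          (fun s hs => Set.mk_mem_prod (Set.left_mem_Icc.2 hε.le) hs)).mono
            (Icc_subset_Icc le_rfl ht.2)).intervalIntegrable_of_Icc ht.1
      have hcont2 : Continuous (fun s : ℝ => ∫ u in (0:ℝ)..y, F (u, s)) := by
        have : Continuous (Function.uncurry fun s u => F (u, s)) := by
          have := hFc.comp (continuous_swap : Continuous (Prod.swap : ℝ × ℝ → ℝ × ℝ))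
          exact this
        exact continuous_parametric_intervalIntegral_of_continuous' this 0 y
      have step3 : ∫ s in (0:ℝ)..t, ft y s
          = (∫ s in (0:ℝ)..t, ft 0 s) + ∫ s in (0:ℝ)..t, ∫ u in (0:ℝ)..y, F (u, s) := by
        rw [← intervalIntegral.integral_add hint1 (hcont2.intervalIntegrable 0 t)]
        apply intervalIntegral.integral_congr
        intro s hs
        rw [uIcc_of_le ht.1] at hs
        show ft y s = ft 0 s + ∫ u in (0:ℝ)..y, F (u, s)
        rw [step2 s ⟨hs.1, hs.2.trans ht.2⟩]
        ring
      -- Fubini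
      have fub : (∫ s in (0:ℝ)..t, ∫ u in (0:ℝ)..y, F (u, s)) = ∫ u in (0:ℝ)..y, G u := by
        simp only [hGdef, intervalIntegral.integral_of_le ht.1,
          intervalIntegral.integral_of_le hy.1]
        have hInt : Integrable (Function.uncurry fun s u => F (u, s))
            ((MeasureTheory.volume.restrict (Ioc (0:ℝ) t)).prod
              (MeasureTheory.volume.restrict (Ioc (0:ℝ) y))) := by
          rw [Measure.prod_restrict]
          have : IntegrableOn (fun p : ℝ × ℝ => F (p.2, p.1)) (Ioc (0:ℝ) t ×ˢ Ioc (0:ℝ) y)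
              (MeasureTheory.volume) := by
            apply (((hFc.comp continuous_swap).continuousOn).integrableOn_compact
              (isCompact_Icc.prod isCompact_Icc) (K := Icc (0:ℝ) t ×ˢ Icc (0:ℝ) y)).mono_set
            exact Set.prod_mono Ioc_subset_Icc_self Ioc_subset_Icc_self
          rw [← Measure.volume_eq_prod]
          exact this
        have := MeasureTheory.integral_integral_swap hInt
        simpa [Function.uncurry] using this
      have : f y t - f y 0
          = (∫ s in (0:ℝ)..t, ft 0 s) + ∫ u in (0:ℝ)..y, G u := by
        rw [← step1, step3, fub]
      linear_combination (norm := ring_nf) this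
    -- now differentiate the right-hand side
    have hd1 : HasDerivWithinAt (fun y => f y 0) (d x) (Icc 0 ε) x := by
      have hdx : d x = Classical.choose (hfx0 x hx) := dif_pos hx
      rw [hdx]
      exact Classical.choose_spec (hfx0 x hx)
    have hD : HasDerivWithinAt
        (fun y => f y 0 + (∫ s in (0:ℝ)..t, ft 0 s) + ∫ u in (0:ℝ)..y, G u)
        (d x + G x) (Icc 0 ε) x :=
      (hd1.add_const _).add (ftc_within hGc hx)
    exact (hD.congr (fun y hy => key y hy) (key x hx))
  · intro x hx t ht
    have h1 : HasDerivWithinAt (fun s => ∫ u in (0:ℝ)..s, F (x, u)) (F (x, t))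
        (Icc 0 εhat) t :=
      ftc_within (hFc.comp (by fun_prop)) ht
    have := h1.const_add (d x)
    rwa [hFeq (x, t) (Set.mk_mem_prod hx ht)] at this
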